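/- Let ρ > 1, Q > 0, and let integers M ≤ N be given with N ≥ 1. Let f : [-1,1] → ℝ be given by a uniformly convergent Chebyshev series f(x) = Σ_{n≥0} a_n T_n(x) with |a_0| ≤ Q and |a_n| ≤ 2Q ρ^{-n} for n ≥ 1. Let c ∈ ℝ^{M+1} solve the normal equations T_M(x^{equi})ᵀ T_M(x^{equi}) c = T_M(x^{equi})ᵀ f(x^{equi}), and set p_M(x) = Σ_{k=0}^M c_k T_k(x). Then sup_{x ∈ [-1,1]} |f(x) − p_M(x)| ≤ 2Q [ 1 + (M+1)(N+1)^{1/2} / σ_{M+1}(T_M(x^{equi})) ] · ρ^{-M}/(ρ−1). -/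

import Mathlib

open Matrix MeasureTheory
open scoped BigOperators

/-- Chebyshev polynomial of the first kind `T_n`, as a function `ℝ → ℝ`. -/
noncomputable def cheb (n : ℕ) (x : ℝ) : ℝ :=
  (Polynomial.Chebyshev.T ℝ (n : ℤ)).eval x

/-- The equally spaced grid `x_k = 2k/N - 1`, `k = 0, …, N`, on `[-1,1]`. -/
noncomputable def xequi (N : ℕ) (k : Fin (N + 1)) : ℝ :=
  2 * (k : ℝ) / (N : ℝ) - 1

/-- The `(N+1) × (M+1)` Chebyshev–Vandermonde matrix at the equally spaced grid. -/
noncomputable def chebVand (N M : ℕ) : Matrix (Fin (N + 1)) (Fin (M + 1)) ℝ :=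
  Matrix.of fun i j => cheb (j : ℕ) (xequi N i)

/-- The Euclidean norm of a vector in `ℝ^n`. -/
noncomputable def enorm2 {n : ℕ} (v : Fin n → ℝ) : ℝ :=
  Real.sqrt (∑ i, (v i) ^ 2)

/-- The smallest singular value of a matrix, as the infimum of `‖A v‖₂` over unit vectors. -/
noncomputable def sigmaMin {m n : ℕ} (A : Matrix (Fin m) (Fin n) ℝ) : ℝ :=
  sInf {r | ∃ v : Fin n → ℝ, enorm2 v = 1 ∧ r = enorm2 (A.mulVec v)}

/-- The largest singular value of a matrix, as the supremum of `‖A v‖₂` over unit vectors. -/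
noncomputable def sigmaMax {m n : ℕ} (A : Matrix (Fin m) (Fin n) ℝ) : ℝ :=
  sSup {r | ∃ v : Fin n → ℝ, enorm2 v = 1 ∧ r = enorm2 (A.mulVec v)}

section ChebPoly

open Polynomial Polynomial.Chebyshev

lemma chebT_deg_coeff : ∀ n : ℕ, (T ℝ (n : ℤ)).natDegree ≤ n ∧
    (T ℝ (n : ℤ)).coeff n = (if n = 0 then 1 else 2 ^ (n - 1)) := by
  have key : ∀ n : ℕ,
      ((T ℝ (n : ℤ)).natDegree ≤ n ∧
        (T ℝ (n : ℤ)).coeff n = (if n = 0 then 1 else 2 ^ (n - 1))) ∧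
      ((T ℝ ((n+1 : ℕ) : ℤ)).natDegree ≤ n+1 ∧
        (T ℝ ((n+1 : ℕ) : ℤ)).coeff (n+1) = (if n+1 = 0 then 1 else 2 ^ (n+1 - 1))) := by
    intro n
    induction n with
    | zero =>
      constructor
      · simp [T_zero]
      · norm_num [T_one]
    | succ n ih =>
      refine ⟨ih.2, ?_, ?_⟩
      · have hT : T ℝ ((n+2 : ℕ) : ℤ) = X * T ℝ ((n+1 : ℕ) : ℤ) + X * T ℝ ((n+1 : ℕ) : ℤ)
            - T ℝ (n : ℤ) := by
          push_cast
          rw [T_add_two]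
          ring
        rw [hT]
        refine (natDegree_sub_le _ _).trans (max_le ?_ (ih.1.1.trans (by omega)))
        refine (natDegree_add_le _ _).trans (max_le ?_ ?_) <;>
        · refine (natDegree_mul_le).trans ?_
          have := ih.2.1
          simp only [natDegree_X]
          omega
      · have hT : T ℝ ((n+2 : ℕ) : ℤ) = X * T ℝ ((n+1 : ℕ) : ℤ) + X * T ℝ ((n+1 : ℕ) : ℤ)
            - T ℝ (n : ℤ) := by
          push_cast
          rw [T_add_two]
          ring
        rw [hT]
        have h1 := ih.2.2
        simp only [Nat.add_sub_cancel, if_neg (Nat.succ_ne_zero n)] at h1 ⊢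
        rw [coeff_sub, coeff_add, show n+2 = (n+1)+1 from rfl, coeff_X_mul,
          coeff_eq_zero_of_natDegree_lt (ih.1.1.trans_lt (by omega)), h1,
          if_neg (by omega : ¬ n + 1 + 1 = 0)]
        ring
  intro n; exact (key n).1

lemma cheb_linind : ∀ (m : ℕ) (v : Fin m → ℝ),
    (∑ j : Fin m, Polynomial.C (v j) * T ℝ ((j : ℕ) : ℤ)) = 0 → v = 0 := by
  intro m
  induction m with
  | zero => intro v _; funext j; exact j.elim0
  | succ m ih =>
    intro v h
    rw [Fin.sum_univ_castSucc] at h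
    have hlast : v (Fin.last m) = 0 := by
      have hco := congrArg (fun p : ℝ[X] => p.coeff m) h
      simp only [coeff_add, finset_sum_coeff, coeff_C_mul, coeff_zero] at hco
      have hz : ∀ j : Fin m, (T ℝ ((j.castSucc : ℕ) : ℤ)).coeff m = 0 := by
        intro j
        exact coeff_eq_zero_of_natDegree_lt
          ((chebT_deg_coeff _).1.trans_lt (by simpa using j.isLt))
      rw [Finset.sum_eq_zero (fun j _ => by rw [hz j, mul_zero])] at hco
      simp only [zero_add, Fin.val_last] at hco
      have hcoeff := (chebT_deg_coeff m).2
      rcases mul_eq_zero.1 hco with h' | h'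
      · exact h'
      · rw [hcoeff] at h'
        split_ifs at h' with hm <;> norm_num at h'
    rw [hlast, map_zero, zero_mul, add_zero] at h
    have := ih (fun j => v j.castSucc) h
    funext j
    refine Fin.lastCases hlast (fun i => ?_) j
    exact congrFun this i

lemma xequi_inj (N : ℕ) (hN : 1 ≤ N) : Function.Injective (xequi N) := by
  intro k l hkl
  have hN0 : (0:ℝ) < (N:ℝ) := by positivity
  have : (k : ℝ) = (l : ℝ) := by
    unfold xequi at hkl
    field_simp at hkl
    linarith
  exact Fin.ext (Nat.cast_injective this)

lemma xequi_mem (N : ℕ) (hN : 1 ≤ N) (i : Fin (N+1)) :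
    xequi N i ∈ Set.Icc (-1:ℝ) 1 := by
  have hN0 : (0:ℝ) < (N:ℝ) := by positivity
  have hi : (i : ℝ) ≤ (N : ℝ) := by exact_mod_cast Nat.lt_succ_iff.1 i.isLt
  have hi0 : (0:ℝ) ≤ (i : ℝ) := Nat.cast_nonneg _
  constructor
  · unfold xequi
    have : (0:ℝ) ≤ 2 * (i:ℝ) / (N:ℝ) := by positivity
    linarith
  · unfold xequi
    have : 2 * (i:ℝ) / (N:ℝ) ≤ 2 := by
      rw [div_le_iff₀ hN0]
      linarith
    linarith

lemma chebVand_inj (N M : ℕ) (hMN : M ≤ N) (hN : 1 ≤ N) (v : Fin (M+1) → ℝ)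
    (hv : (chebVand N M).mulVec v = 0) : v = 0 := by
  set p : ℝ[X] := ∑ j : Fin (M+1), Polynomial.C (v j) * T ℝ ((j : ℕ) : ℤ) with hp
  have hdeg : p.natDegree ≤ M := by
    refine natDegree_sum_le_of_forall_le _ _ (fun j _ => ?_)
    exact (natDegree_C_mul_le _ _).trans ((chebT_deg_coeff _).1.trans (by omega))
  have heval : ∀ i : Fin (N+1), p.eval (xequi N i) = 0 := by
    intro i
    have := congrFun hv i
    simp only [mulVec, dotProduct, chebVand, Matrix.of_apply, Pi.zero_apply] at this
    rw [hp, eval_finset_sum]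
    simpa [cheb, mul_comm] using this
  have hp0 : p = 0 := by
    refine eq_zero_of_natDegree_lt_card_of_eval_eq_zero p (xequi_inj N hN) heval ?_
    simpa using lt_of_le_of_lt hdeg (by omega : M < N + 1)
  exact cheb_linind _ v (by rw [← hp]; exact hp0)

end ChebPoly

section Norms

lemma enorm2_nonneg {n : ℕ} (v : Fin n → ℝ) : 0 ≤ enorm2 v := Real.sqrt_nonneg _

lemma sq_enorm2 {n : ℕ} (v : Fin n → ℝ) : enorm2 v ^ 2 = ∑ i, (v i) ^ 2 :=
  Real.sq_sqrt (Finset.sum_nonneg fun i _ => sq_nonneg _)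

lemma enorm2_eq_zero {n : ℕ} {v : Fin n → ℝ} (h : enorm2 v = 0) : v = 0 := by
  have h2 : ∑ i, (v i) ^ 2 = 0 := by
    have := sq_enorm2 v; rw [h] at this; simpa using this.symm
  funext i
  have := (Finset.sum_eq_zero_iff_of_nonneg (fun i _ => sq_nonneg (v i))).1 h2 i (by simp)
  exact pow_eq_zero_iff (by norm_num) |>.1 this

lemma enorm2_smul {n : ℕ} (t : ℝ) (v : Fin n → ℝ) :
    enorm2 (t • v) = |t| * enorm2 v := by
  unfold enorm2
  rw [← Real.sqrt_sq_eq_abs, ← Real.sqrt_mul (sq_nonneg t), Finset.mul_sum]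
  congr 1
  refine Finset.sum_congr rfl fun i _ => ?_
  simp [mul_pow]

lemma abs_dotProduct_le {n : ℕ} (u v : Fin n → ℝ) :
    u ⬝ᵥ v ≤ enorm2 u * enorm2 v := by
  simpa [dotProduct, enorm2] using
    Real.sum_mul_le_sqrt_mul_sqrt Finset.univ u v

lemma coord_le_enorm2 {n : ℕ} (v : Fin n → ℝ) (i : Fin n) : |v i| ≤ enorm2 v := by
  rw [← Real.sqrt_sq_eq_abs]
  exact Real.sqrt_le_sqrt (Finset.single_le_sum (fun j _ => sq_nonneg (v j)) (by simp))

lemma sum_abs_le_enorm2 {n : ℕ} (v : Fin n → ℝ) :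
    ∑ i, |v i| ≤ Real.sqrt n * enorm2 v := by
  have := Real.sum_mul_le_sqrt_mul_sqrt Finset.univ (fun _ : Fin n => (1:ℝ)) (fun i => |v i|)
  simpa [enorm2, sq_abs, Finset.card_univ] using this

lemma continuous_enorm2 {n : ℕ} : Continuous (enorm2 (n := n)) := by
  unfold enorm2
  fun_prop

lemma sigmaMin_bddBelow {m n : ℕ} (A : Matrix (Fin m) (Fin n) ℝ) :
    BddBelow {r | ∃ v : Fin n → ℝ, enorm2 v = 1 ∧ r = enorm2 (A.mulVec v)} :=
  ⟨0, fun r ⟨v, _, hr⟩ => hr ▸ enorm2_nonneg _⟩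

lemma sphere_nonempty (n : ℕ) : ∃ v : Fin (n+1) → ℝ, enorm2 v = 1 := by
  refine ⟨fun i => if i = 0 then 1 else 0, ?_⟩
  unfold enorm2
  rw [Finset.sum_eq_single 0] <;> simp +contextual

lemma sigmaMin_le {m n : ℕ} (A : Matrix (Fin m) (Fin n) ℝ) {v : Fin n → ℝ}
    (hv : enorm2 v = 1) : sigmaMin A ≤ enorm2 (A.mulVec v) :=
  csInf_le (sigmaMin_bddBelow A) ⟨v, hv, rfl⟩

lemma sigmaMin_mul_le {m n : ℕ} (A : Matrix (Fin m) (Fin (n+1)) ℝ) (v : Fin (n+1) → ℝ) :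
    sigmaMin A * enorm2 v ≤ enorm2 (A.mulVec v) := by
  rcases eq_or_ne v 0 with rfl | hv
  · simp [show enorm2 (0 : Fin (n+1) → ℝ) = 0 by simp [enorm2], mulVec_zero,
      show enorm2 (0 : Fin m → ℝ) = 0 by simp [enorm2]]
  · have hpos : 0 < enorm2 v :=
      (enorm2_nonneg v).lt_of_ne' (fun h => hv (enorm2_eq_zero h))
    have hu : enorm2 ((enorm2 v)⁻¹ • v) = 1 := by
      rw [enorm2_smul, abs_of_pos (inv_pos.2 hpos), inv_mul_cancel₀ hpos.ne']
    have := sigmaMin_le A hu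
    rw [mulVec_smul, enorm2_smul, abs_of_pos (inv_pos.2 hpos)] at this
    calc sigmaMin A * enorm2 v ≤ ((enorm2 v)⁻¹ * enorm2 (A.mulVec v)) * enorm2 v :=
          mul_le_mul_of_nonneg_right this hpos.le
      _ = enorm2 (A.mulVec v) := by field_simp

lemma sigmaMin_pos {m n : ℕ} (A : Matrix (Fin m) (Fin (n+1)) ℝ)
    (hinj : ∀ v : Fin (n+1) → ℝ, A.mulVec v = 0 → v = 0) : 0 < sigmaMin A := by
  set K : Set (Fin (n+1) → ℝ) := {v | enorm2 v = 1} with hK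
  have hKc : IsCompact K := by
    have hclosed : IsClosed K := isClosed_eq continuous_enorm2 continuous_const
    have hbdd : Bornology.IsBounded K := by
      refine (Metric.isBounded_closedBall (x := (0 : Fin (n+1) → ℝ)) (r := 1)).subset ?_
      intro v hv
      rw [Metric.mem_closedBall, dist_zero_right]
      refine (pi_norm_le_iff_of_nonneg zero_le_one).2 fun i => ?_
      simpa [Real.norm_eq_abs] using (coord_le_enorm2 v i).trans_eq hv
    exact Metric.isCompact_of_isClosed_isBounded hclosed hbdd
  have hg : Continuous fun v : Fin (n+1) → ℝ => enorm2 (A.mulVec v) := by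
    refine continuous_enorm2.comp ?_
    unfold Matrix.mulVec dotProduct
    fun_prop
  obtain ⟨v0, hv0⟩ := sphere_nonempty n
  obtain ⟨w, hwK, hmin⟩ := hKc.exists_isMinOn ⟨v0, hv0⟩ hg.continuousOn
  have hwpos : 0 < enorm2 (A.mulVec w) := by
    refine (enorm2_nonneg _).lt_of_ne' fun h => ?_
    have hw0 : w = 0 := hinj w (enorm2_eq_zero h)
    rw [hK] at hwK
    simp only [Set.mem_setOf_eq, hw0] at hwK
    rw [show enorm2 (0 : Fin (n+1) → ℝ) = 0 by simp [enorm2]] at hwK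
    norm_num at hwK
  refine lt_of_lt_of_le hwpos (le_csInf ⟨_, v0, hv0, rfl⟩ ?_)
  rintro r ⟨v, hv, rfl⟩
  exact hmin hv

end Norms

section Tail

lemma abs_cheb_le (n : ℕ) {x : ℝ} (hx : x ∈ Set.Icc (-1:ℝ) 1) : |cheb n x| ≤ 1 := by
  have hcos : Real.cos (Real.arccos x) = x := Real.cos_arccos hx.1 hx.2
  have : cheb n x = Real.cos ((n : ℤ) * Real.arccos x) := by
    rw [cheb, ← hcos, Polynomial.Chebyshev.T_real_cos, hcos]
  rw [this]
  exact Real.abs_cos_le_one _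

lemma tail_bound (ρ Q : ℝ) (hρ : 1 < ρ) (hQ : 0 < Q) (M : ℕ) (a : ℕ → ℝ) (x : ℝ)
    (hx : x ∈ Set.Icc (-1:ℝ) 1) (S : ℝ) (hS : HasSum (fun n => a n * cheb n x) S)
    (ha : ∀ n : ℕ, 1 ≤ n → |a n| ≤ 2 * Q * ρ ^ (-(n : ℤ))) :
    |S - ∑ k ∈ Finset.range (M+1), a k * cheb k x| ≤ 2 * Q * ρ ^ (-(M:ℤ)) / (ρ - 1) := by
  have hρ0 : (0:ℝ) < ρ := lt_trans one_pos hρ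
  have hinv0 : (0:ℝ) ≤ ρ⁻¹ := by positivity
  have hinv1 : ρ⁻¹ < 1 := inv_lt_one_of_one_lt₀ hρ
  set g : ℕ → ℝ := fun n => a n * cheb n x with hg
  have hsum : Summable g := hS.summable
  have hkey : S - ∑ k ∈ Finset.range (M+1), g k = ∑' n, g (n + (M+1)) := by
    have := Summable.sum_add_tsum_nat_add (f := g) (M+1) hsum
    rw [hS.tsum_eq] at this
    linarith
  rw [hkey]
  set C : ℝ := 2 * Q * ρ ^ (-((M:ℤ)+1)) with hC
  have hgeo : HasSum (fun n : ℕ => C * ρ⁻¹ ^ n) (C * (1 - ρ⁻¹)⁻¹) :=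
    (hasSum_geometric_of_lt_one hinv0 hinv1).mul_left C
  have hbound : ∀ n : ℕ, ‖g (n + (M+1))‖ ≤ C * ρ⁻¹ ^ n := by
    intro n
    have h1 : |a (n + (M+1))| ≤ 2 * Q * ρ ^ (-((n + (M+1) : ℕ) : ℤ)) :=
      ha _ (by omega)
    have h2 : |cheb (n + (M+1)) x| ≤ 1 := abs_cheb_le _ hx
    have hz : ρ ^ (-((n + (M+1) : ℕ) : ℤ)) = ρ ^ (-((M:ℤ)+1)) * ρ⁻¹ ^ n := by
      rw [← zpow_natCast ρ⁻¹, _root_.inv_zpow, ← _root_.zpow_neg, ← zpow_add₀ hρ0.ne']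
      congr 1
      push_cast
      ring
    calc ‖g (n + (M+1))‖ = |a (n + (M+1))| * |cheb (n + (M+1)) x| := by
          rw [hg]; simp [Real.norm_eq_abs, abs_mul]
      _ ≤ (2 * Q * ρ ^ (-((n + (M+1) : ℕ) : ℤ))) * 1 := by
          apply mul_le_mul h1 h2 (abs_nonneg _)
          positivity
      _ = C * ρ⁻¹ ^ n := by rw [mul_one, hz, hC]; ring
  have := tsum_of_norm_bounded hgeo hbound
  rw [Real.norm_eq_abs] at this
  refine this.trans (le_of_eq ?_)
  rw [hC]
  have hρ1 : ρ - 1 ≠ 0 := by linarith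
  have h1 : ρ ^ (-((M:ℤ)+1)) = ρ ^ (-(M:ℤ)) * ρ⁻¹ := by
    rw [← _root_.zpow_neg_one, ← zpow_add₀ hρ0.ne']
    congr 1
    ring
  rw [h1]
  have h2 : (1 - ρ⁻¹)⁻¹ = ρ / (ρ - 1) := by
    rw [eq_div_iff hρ1]
    field_simp
  rw [h2]
  field_simp

end Tail

/-- **Theorem 4.1 of the paper, uniform error bound**: if `f(x) = Σ a_n T_n(x)` on
`[-1,1]` with `|a_0| ≤ Q`, `|a_n| ≤ 2Qρ^{-n}`, and `p_M = Σ c_k T_k` where `c` solves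
the unperturbed normal equations at `N+1` equally spaced points, then
`sup_{x∈[-1,1]} |f(x) − p_M(x)| ≤ 2Q [1 + (M+1)√(N+1)/σ_{M+1}(T_M(x^equi))] ρ^{-M}/(ρ−1)`. -/
theorem least_squares_uniform_error (ρ Q : ℝ) (hρ : 1 < ρ) (hQ : 0 < Q)
    (M N : ℕ) (hMN : M ≤ N) (hN : 1 ≤ N)
    (f : ℝ → ℝ) (a : ℕ → ℝ)
    (hf : ∀ x ∈ Set.Icc (-1 : ℝ) 1, HasSum (fun n : ℕ => a n * cheb n x) (f x))
    (ha0 : |a 0| ≤ Q)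
    (ha : ∀ n : ℕ, 1 ≤ n → |a n| ≤ 2 * Q * ρ ^ (-(n : ℤ)))
    (c : Fin (M + 1) → ℝ)
    (hc : ((chebVand N M).transpose * chebVand N M) *ᵥ c =
      (chebVand N M).transpose *ᵥ (fun i => f (xequi N i))) :
    ∀ x ∈ Set.Icc (-1 : ℝ) 1,
      |f x - ∑ k : Fin (M + 1), c k * cheb (k : ℕ) x| ≤
        2 * Q * (1 + ((M : ℝ) + 1) * Real.sqrt ((N : ℝ) + 1) / sigmaMin (chebVand N M)) *
          (ρ ^ (-(M : ℤ)) / (ρ - 1)) := by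
  intro x hx
  have hρ0 : (0:ℝ) < ρ := lt_trans one_pos hρ
  set A := chebVand N M with hA
  set E : ℝ := 2 * Q * ρ ^ (-(M:ℤ)) / (ρ - 1) with hE
  have hE0 : 0 ≤ E := by
    apply div_nonneg _ (by linarith)
    positivity
  set b : Fin (M+1) → ℝ := fun k => a (k : ℕ) with hb
  set fg : Fin (N+1) → ℝ := fun i => f (xequi N i) with hfg
  set r : Fin (N+1) → ℝ := fg - A *ᵥ b with hr
  set d : Fin (M+1) → ℝ := c - b with hd
  set σ : ℝ := sigmaMin A with hσ
  have hσpos : 0 < σ := sigmaMin_pos A (chebVand_inj N M hMN hN)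
  -- tail bound at any point
  have htail : ∀ y ∈ Set.Icc (-1:ℝ) 1,
      |f y - ∑ k ∈ Finset.range (M+1), a k * cheb k y| ≤ E :=
    fun y hy => tail_bound ρ Q hρ hQ M a y hy (f y) (hf y hy) ha
  -- residual bound componentwise
  have hrb : ∀ i : Fin (N+1), |r i| ≤ E := by
    intro i
    have : r i = f (xequi N i) - ∑ k ∈ Finset.range (M+1), a k * cheb k (xequi N i) := by
      rw [hr]
      simp only [Pi.sub_apply, hfg, mulVec, dotProduct, hA, chebVand, Matrix.of_apply, hb]
      rw [← Fin.sum_univ_eq_sum_range (fun k => a k * cheb k (xequi N i)) (M+1)]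
      congr 1
      exact Finset.sum_congr rfl fun j _ => mul_comm _ _
    rw [this]
    exact htail _ (xequi_mem N hN i)
  -- Euclidean norm of residual
  have hrnorm : enorm2 r ≤ Real.sqrt ((N:ℝ)+1) * E := by
    have hsum : ∑ i, (r i)^2 ≤ ∑ _i : Fin (N+1), E^2 := by
      refine Finset.sum_le_sum fun i _ => ?_
      rw [← sq_abs]
      exact pow_le_pow_left₀ (abs_nonneg _) (hrb i) 2
    have : enorm2 r ≤ Real.sqrt (((N:ℝ)+1) * E^2) := by
      refine Real.sqrt_le_sqrt (hsum.trans_eq ?_)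
      rw [Finset.sum_const, Finset.card_univ, Fintype.card_fin, nsmul_eq_mul]
      push_cast
      ring
    refine this.trans_eq ?_
    rw [Real.sqrt_mul (by positivity), Real.sqrt_sq hE0]
  -- normal equations: Aᵀ (A d) = Aᵀ r
  have hnormal : Aᵀ *ᵥ (A *ᵥ d) = Aᵀ *ᵥ r := by
    have h1 : A *ᵥ d = A *ᵥ c - A *ᵥ b := by rw [hd, mulVec_sub]
    rw [h1, mulVec_sub, hr, mulVec_sub, mulVec_mulVec, mulVec_mulVec, hc]
  -- the Cauchy trick: ‖A d‖ ≤ ‖r‖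
  set w : Fin (N+1) → ℝ := A *ᵥ d with hw
  have hdot : w ⬝ᵥ w = r ⬝ᵥ w := by
    have e1 : d ⬝ᵥ (Aᵀ *ᵥ w) = w ⬝ᵥ w := by
      rw [dotProduct_mulVec, vecMul_transpose, ← hw]
    have e2 : d ⬝ᵥ (Aᵀ *ᵥ r) = w ⬝ᵥ r := by
      rw [dotProduct_mulVec, vecMul_transpose, ← hw]
    rw [← e1, hnormal, e2, dotProduct_comm]
  have hwle : enorm2 w ≤ enorm2 r := by
    rcases (enorm2_nonneg w).eq_or_lt with h0 | h0
    · rw [← h0]; exact enorm2_nonneg r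
    · have hsq : enorm2 w ^ 2 = w ⬝ᵥ w := by
        rw [sq_enorm2]
        simp [dotProduct, sq]
      have : enorm2 w * enorm2 w ≤ enorm2 r * enorm2 w := by
        rw [← sq, hsq, hdot]
        exact abs_dotProduct_le r w
      exact le_of_mul_le_mul_right this h0
  -- bound on the coefficient error
  have hdnorm : enorm2 d ≤ Real.sqrt ((N:ℝ)+1) * E / σ := by
    rw [le_div_iff₀ hσpos]
    calc enorm2 d * σ = σ * enorm2 d := mul_comm _ _
      _ ≤ enorm2 w := sigmaMin_mul_le A d
      _ ≤ enorm2 r := hwle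
      _ ≤ Real.sqrt ((N:ℝ)+1) * E := hrnorm
  -- split the error
  have hsplit : f x - ∑ k : Fin (M+1), c k * cheb (k:ℕ) x =
      (f x - ∑ k ∈ Finset.range (M+1), a k * cheb k x) - ∑ k : Fin (M+1), d k * cheb (k:ℕ) x := by
    rw [← Fin.sum_univ_eq_sum_range (fun k => a k * cheb k x) (M+1)]
    have : ∀ k : Fin (M+1), c k * cheb (k:ℕ) x =
        a (k:ℕ) * cheb (k:ℕ) x + d k * cheb (k:ℕ) x := by
      intro k
      rw [hd]
      simp only [Pi.sub_apply, hb]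
      ring
    rw [Finset.sum_congr rfl fun k _ => this k, Finset.sum_add_distrib]
    ring
  rw [hsplit]
  have hsum_d : |∑ k : Fin (M+1), d k * cheb (k:ℕ) x| ≤ ((M:ℝ)+1) * (Real.sqrt ((N:ℝ)+1) * E / σ) := by
    have h1 : |∑ k : Fin (M+1), d k * cheb (k:ℕ) x| ≤ ∑ k : Fin (M+1), |d k| := by
      refine (Finset.abs_sum_le_sum_abs _ _).trans (Finset.sum_le_sum fun k _ => ?_)
      rw [abs_mul]
      calc |d k| * |cheb (k:ℕ) x| ≤ |d k| * 1 :=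
            mul_le_mul_of_nonneg_left (abs_cheb_le _ hx) (abs_nonneg _)
        _ = |d k| := mul_one _
    have h2 : ∑ k : Fin (M+1), |d k| ≤ Real.sqrt ((M:ℝ)+1) * enorm2 d := by
      have := sum_abs_le_enorm2 d
      rwa [show ((M+1 : ℕ) : ℝ) = (M:ℝ)+1 by push_cast; ring] at this
    have h3 : Real.sqrt ((M:ℝ)+1) ≤ (M:ℝ)+1 := by
      nth_rewrite 2 [← Real.sqrt_sq (by positivity : (0:ℝ) ≤ (M:ℝ)+1)]
      refine Real.sqrt_le_sqrt ?_
      nlinarith [Nat.cast_nonneg (α := ℝ) M]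
    have h4 : 0 ≤ Real.sqrt ((N:ℝ)+1) * E / σ := by positivity
    calc |∑ k : Fin (M+1), d k * cheb (k:ℕ) x| ≤ Real.sqrt ((M:ℝ)+1) * enorm2 d :=
          h1.trans h2
      _ ≤ Real.sqrt ((M:ℝ)+1) * (Real.sqrt ((N:ℝ)+1) * E / σ) :=
          mul_le_mul_of_nonneg_left hdnorm (Real.sqrt_nonneg _)
      _ ≤ ((M:ℝ)+1) * (Real.sqrt ((N:ℝ)+1) * E / σ) :=
          mul_le_mul_of_nonneg_right h3 h4
  calc |(f x - ∑ k ∈ Finset.range (M+1), a k * cheb k x) - ∑ k : Fin (M+1), d k * cheb (k:ℕ) x|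
      ≤ |f x - ∑ k ∈ Finset.range (M+1), a k * cheb k x| +
        |∑ k : Fin (M+1), d k * cheb (k:ℕ) x| := abs_sub _ _
    _ ≤ E + ((M:ℝ)+1) * (Real.sqrt ((N:ℝ)+1) * E / σ) := add_le_add (htail x hx) hsum_d
    _ = 2 * Q * (1 + ((M:ℝ)+1) * Real.sqrt ((N:ℝ)+1) / σ) * (ρ ^ (-(M:ℤ)) / (ρ - 1)) := by
        rw [hE, mul_div_assoc]
        set t : ℝ := ρ ^ (-(M:ℤ)) / (ρ - 1) with ht
        field_simp
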